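/- Let Bob's combined payoff over three contracts be u_Bob(σ_A, σ_e) + (2m+1)·[σ_c = σ¹_B] + (4m+3)·[σ_e = σ_c], where σ_e is his strategy in the escrow contract and σ_c his strategy in the commitment contract, and |u_Bob| ≤ m. Then any pair (σ_e, σ_c) maximizing Bob's combined payoff (for fixed σ_A) satisfies σ_e = σ_c = σ¹_B. -/
import Mathlib


theorem two_auxiliary_contracts_force_strategy
    {SA SB : Type} [Nonempty SA] [Nonempty SB] [DecidableEq SB]
    (σ1B : SB) (uBob : SA → SB → ℝ) (m : ℝ) (hm : 0 < m)
    (hbound : ∀ σA σB, |uBob σA σB| ≤ m)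
    (U : SA → SB → SB → ℝ)
    (hU : ∀ σA σe σc, U σA σe σc = uBob σA σe
        + (2*m+1) * (if σc = σ1B then 1 else 0)
        + (4*m+3) * (if σe = σc then 1 else 0)) :
    ∀ (σA : SA) (σe σc : SB),
      (∀ σe' σc', U σA σe' σc' ≤ U σA σe σc) → σe = σ1B ∧ σc = σ1B := by
  intro σA σe σc hmax
  have h1 := hmax σ1B σ1B
  rw [hU, hU] at h1
  simp only [if_pos rfl] at h1
  have hb1 := abs_le.1 (hbound σA σ1B)
  have hb2 := abs_le.1 (hbound σA σe)
  by_cases hc : σc = σ1B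
  · subst hc
    by_cases he : σe = σc
    · exact ⟨he, rfl⟩
    · simp only [he, if_false, if_true] at h1
      exfalso; linarith
  · by_cases he : σe = σc
    · subst he
      simp only [hc, if_false, if_true] at h1
      exfalso; linarith
    · simp only [hc, he, if_false, if_true] at h1
      exfalso; linarith
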